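/- Let s ∈ (0,1) and let g(z) = Γ(2s−z) Γ(z+1)/Γ(2s) − sin(π(s−z))/sin(πs). Then there exists M > 0 such that g(β) ≠ 0 for every β ∈ ℂ with Re β ∈ (0, 2s + 1/2) and |Im β| ≥ M. -/

import Mathlib

/-!
STATEMENT 19: For s ∈ (0,1), with g(z) = Γ(2s−z)Γ(z+1)/Γ(2s) − sin(π(s−z))/sin(πs),
there exists M > 0 such that g(β) ≠ 0 for every β ∈ ℂ with Re β ∈ (0, 2s+1/2)
and |Im β| ≥ M.
-/

open Real Set

theorem myNormGammaLe {z : ℂ} (hz : 0 < z.re) : ‖Complex.Gamma z‖ ≤ Real.Gamma z.re := by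
  rw [Complex.Gamma_eq_integral hz, Real.Gamma_eq_integral hz, Complex.GammaIntegral]
  refine le_trans (MeasureTheory.norm_integral_le_integral_norm _) (le_of_eq ?_)
  refine MeasureTheory.setIntegral_congr_fun measurableSet_Ioi fun x hx => ?_
  rw [norm_mul, Complex.norm_real, Real.norm_eq_abs,
    Complex.norm_cpow_eq_rpow_re_of_pos hx, Complex.sub_re, Complex.one_re,
    abs_of_nonneg (Real.exp_pos _).le]

theorem mySinhLeNormSin (z : ℂ) : Real.sinh |z.im| ≤ ‖Complex.sin z‖ := by
  rw [Complex.sin, ← Real.abs_sinh, Real.sinh_eq]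
  have h1 : ‖(Complex.exp (-z * Complex.I) - Complex.exp (z * Complex.I)) * Complex.I / 2‖
      = ‖Complex.exp (-z * Complex.I) - Complex.exp (z * Complex.I)‖ / 2 := by
    simp [norm_div, norm_mul]
  rw [h1, abs_div]
  have h2 : |rexp z.im - rexp (-z.im)|
      ≤ ‖Complex.exp (-z * Complex.I) - Complex.exp (z * Complex.I)‖ := by
    have e1 : ‖Complex.exp (-z * Complex.I)‖ = rexp z.im := by
      rw [Complex.norm_exp]; congr 1; simp
    have e2 : ‖Complex.exp (z * Complex.I)‖ = rexp (-z.im) := by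
      rw [Complex.norm_exp]; congr 1; simp
    calc |rexp z.im - rexp (-z.im)|
        = |‖Complex.exp (-z * Complex.I)‖ - ‖Complex.exp (z * Complex.I)‖| := by rw [e1, e2]
      _ ≤ _ := abs_norm_sub_norm_le _ _
  have h3 : |(2:ℝ)| = 2 := by norm_num
  rw [h3]
  linarith

theorem myGammaBound {x : ℝ} (h1 : 1/2 ≤ x) (h2 : x ≤ 7/2) : Real.Gamma x ≤ 4 := by
  have hsp : Real.sqrt π ≤ 2 := by
    rw [show (2:ℝ) = Real.sqrt 4 by
      rw [show (4:ℝ) = 2^2 by norm_num, Real.sqrt_sq (by norm_num)]]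
    exact Real.sqrt_le_sqrt (by linarith [Real.pi_le_four])
  have ha : Real.Gamma (1/2) ≤ 4 := by rw [Real.Gamma_one_half_eq]; linarith
  have hb : Real.Gamma (7/2) ≤ 4 := by
    have : Real.Gamma (7/2) = (5/2) * ((3/2) * ((1/2) * Real.sqrt π)) := by
      rw [show (7/2:ℝ) = 5/2 + 1 by norm_num, Real.Gamma_add_one (by norm_num),
        show (5/2:ℝ) = 3/2 + 1 by norm_num, Real.Gamma_add_one (by norm_num),
        show (3/2:ℝ) = 1/2 + 1 by norm_num, Real.Gamma_add_one (by norm_num),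
        Real.Gamma_one_half_eq]
    rw [this]; nlinarith [Real.sqrt_nonneg π]
  have := Real.convexOn_Gamma.le_max_of_mem_Icc (by norm_num : (1/2:ℝ) ∈ Ioi 0)
    (by norm_num : (7/2:ℝ) ∈ Ioi 0) ⟨h1, h2⟩
  exact this.trans (max_le ha hb)

noncomputable def gFun (s : ℝ) (z : ℂ) : ℂ :=
  Complex.Gamma (2 * s - z) * Complex.Gamma (z + 1) / Complex.Gamma (2 * s) -
    Complex.sin (Real.pi * (s - z)) / Complex.sin (Real.pi * s)

theorem gFun_no_zeros_large_imaginary (s : ℝ) (hs : s ∈ Set.Ioo (0 : ℝ) 1) :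
    ∃ M > 0, ∀ β : ℂ, β.re ∈ Set.Ioo (0 : ℝ) (2 * s + 1/2) →
      M ≤ |β.im| → gFun s β ≠ 0 := by
  obtain ⟨hs0, hs1⟩ := hs
  have hpi := Real.pi_pos
  set S := Real.sin (π * s) with hSdef
  have hS : 0 < S := Real.sin_pos_of_pos_of_lt_pi (by positivity) (by nlinarith)
  set G := Real.Gamma (2 * s) with hGdef
  have hG : 0 < G := Real.Gamma_pos_of_pos (by linarith)
  refine ⟨max 1 (16 * S / (π * G)), lt_of_lt_of_le one_pos (le_max_left _ _), ?_⟩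
  intro β hβre hβim h0
  obtain ⟨hb0, hb1⟩ := hβre
  set T := |β.im| with hTdef
  have hT1 : 1 ≤ T := le_trans (le_max_left _ _) hβim
  have hTA : 16 * S / (π * G) ≤ T := le_trans (le_max_right _ _) hβim
  have hT0 : 0 < T := by linarith
  -- casts
  have hGc : Complex.Gamma (2 * (s:ℂ)) = (G : ℂ) := by
    rw [show 2 * (s:ℂ) = ((2*s : ℝ) : ℂ) by push_cast; ring, Complex.Gamma_ofReal]
  have hSc : Complex.sin ((π:ℂ) * (s:ℂ)) = (S : ℂ) := by
    rw [show (π:ℂ) * (s:ℂ) = ((π * s : ℝ) : ℂ) by push_cast; ring, ← Complex.ofReal_sin]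
  -- the equation from gFun s β = 0
  rw [gFun, sub_eq_zero] at h0
  have hnorm := congrArg norm h0
  -- bound the Gamma side
  set w : ℂ := 2 * (s:ℂ) - β with hwdef
  have hwre : w.re = 2 * s - β.re := by simp [hwdef]
  have hwim : w.im = -β.im := by simp [hwdef]
  have hwne : w ≠ 0 := by
    intro h
    rw [h] at hwim
    simp only [Complex.zero_im, eq_comm, neg_eq_zero] at hwim
    have hTz : T = 0 := by rw [hTdef, hwim]; simp
    linarith
  have hnw : T ≤ ‖w‖ := by
    have := Complex.abs_im_le_norm w
    rw [hwim] at this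
    simpa [hTdef] using this
  have hΓw1 : ‖Complex.Gamma (w + 1)‖ ≤ 4 := by
    refine le_trans (myNormGammaLe ?_) (myGammaBound ?_ ?_) <;>
      simp only [Complex.add_re, Complex.one_re, hwre] <;> linarith
  have hΓw : ‖Complex.Gamma w‖ ≤ 4 / T := by
    have heq : ‖Complex.Gamma w‖ = ‖Complex.Gamma (w + 1)‖ / ‖w‖ := by
      rw [Complex.Gamma_add_one w hwne, norm_mul,
        mul_div_cancel_left₀ _ (by simpa using hwne)]
    rw [heq]
    exact div_le_div₀ (by norm_num) hΓw1 hT0 hnw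
  have hΓβ : ‖Complex.Gamma (β + 1)‖ ≤ 4 := by
    refine le_trans (myNormGammaLe ?_) (myGammaBound ?_ ?_) <;>
      simp only [Complex.add_re, Complex.one_re] <;> linarith
  have hP : ‖Complex.Gamma w * Complex.Gamma (β + 1) / Complex.Gamma (2 * (s:ℂ))‖
      ≤ 16 / (T * G) := by
    rw [hGc, norm_div, norm_mul, Complex.norm_real, Real.norm_eq_abs,
      abs_of_pos hG]
    have : ‖Complex.Gamma w‖ * ‖Complex.Gamma (β + 1)‖ ≤ (4 / T) * 4 := by
      exact mul_le_mul hΓw hΓβ (norm_nonneg _) (by positivity)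
    calc ‖Complex.Gamma w‖ * ‖Complex.Gamma (β + 1)‖ / G ≤ (4 / T) * 4 / G := by
          exact div_le_div_of_nonneg_right this hG.le |>.trans_eq rfl
      _ = 16 / (T * G) := by field_simp; ring
  -- bound the sine side from below
  have hQ : Real.sinh (π * T) / S ≤ ‖Complex.sin ((π:ℂ) * ((s:ℂ) - β)) / Complex.sin ((π:ℂ) * (s:ℂ))‖ := by
    rw [hSc, norm_div, Complex.norm_real, Real.norm_eq_abs, abs_of_pos hS]
    apply div_le_div_of_nonneg_right _ hS.le
    have him : |((π:ℂ) * ((s:ℂ) - β)).im| = π * T := by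
      have : ((π:ℂ) * ((s:ℂ) - β)).im = π * (-β.im) := by simp
      rw [this, abs_mul, abs_of_pos hpi, hTdef, abs_neg]
    have := mySinhLeNormSin ((π:ℂ) * ((s:ℂ) - β))
    rwa [him] at this
  -- key strict inequality
  have hsinh : π * T < Real.sinh (π * T) := Real.self_lt_sinh_iff.mpr (by positivity)
  have hkey : 16 / (T * G) < Real.sinh (π * T) / S := by
    rw [div_lt_div_iff₀ (by positivity) hS]
    have h1 : 16 * S ≤ π * G * T := by
      rw [div_le_iff₀ (by positivity)] at hTA
      linarith
    nlinarith [mul_pos hT0 hG, mul_pos hpi hT0]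
  rw [hnorm] at hP
  linarith [hQ.trans hP]
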